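/- Let G = G_{J_1} ∘ ⋯ ∘ G_{J_m} be a star network, let I be an ordered set partition of [n] of type λ, and let U ∈ U_I(G). Then incross(U) = incross(δ(U)) + cdncross(δ(U)). -/

import Mathlib

/- Common combinatorial setup: star networks, covering path families,
   crossing/noncrossing statistics, and the base ring ℤ[q^{1/2},q^{-1/2}]. -/

open Equiv Finset
open scoped Classical

noncomputable section

/-- The ring `ℤ[q^{1/2}, q^{-1/2}]`, realized as Laurent polynomials in the
variable `q^{1/2}` (so the exponent-`k` monomial is `q^{k/2}`). -/
abbrev R2 : Type := LaurentPolynomial ℤ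

/-- `q^{k/2}`. -/
def Qp (k : ℤ) : R2 := LaurentPolynomial.T k

/-- `q`. -/
def qq : R2 := LaurentPolynomial.T 2

/-- Coxeter length of a permutation, i.e. its inversion number. -/
def len {n : ℕ} (w : Perm (Fin n)) : ℕ :=
  ((univ : Finset (Fin n × Fin n)).filter fun p => p.1 < p.2 ∧ w p.2 < w p.1).card

/-- Membership in the interval `J = [a,b] ⊆ [n]`. -/
def memJ {n : ℕ} (J : Fin n × Fin n) (i : Fin n) : Prop := J.1 ≤ i ∧ i ≤ J.2

/-- Membership in the subgroup `S_J ≤ S_n` generated by the adjacent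
transpositions `s_a, …, s_{b-1}` of the interval `J = [a,b]`; equivalently,
the permutations supported on `[a,b]`. -/
def inSJ {n : ℕ} (J : Fin n × Fin n) (w : Perm (Fin n)) : Prop :=
  ∀ i, w i ≠ i → memJ J i

/-- A path family covering the star network `G_{J_1} ∘ ⋯ ∘ G_{J_m}` is
faithfully encoded by the permutation of the wire positions realized at each
simple-star factor: at factor `p` the paths whose current positions lie in
`J_p` pass through the central vertex and are permuted arbitrarily within
`J_p` (every entering and leaving edge being used exactly once), while all
other paths use their unique horizontal edge.  Thus a covering family is a
sequence `vs` of permutations with `vs p` supported on `J_p`. -/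
def IsPathFamily {n m : ℕ} (Js : Fin m → Fin n × Fin n)
    (vs : Fin m → Perm (Fin n)) : Prop :=
  ∀ p, inSJ (Js p) (vs p)

/-- The position of the path starting at source `i` just before factor `k`
(as a permutation of sources). -/
def posAt {n m : ℕ} (vs : Fin m → Perm (Fin n)) (k : ℕ) : Perm (Fin n) :=
  (((List.ofFn vs).take k).reverse).prod

/-- The type of a covering path family: the path starting at source `i`
terminates at sink `typeOf vs i`. -/
def typeOf {n m : ℕ} (vs : Fin m → Perm (Fin n)) : Perm (Fin n) := posAt vs m

/-- The path from source `i` passes through the central vertex of the factor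
`G_{J_p}`. -/
def centeredAt {n m : ℕ} (Js : Fin m → Fin n × Fin n) (vs : Fin m → Perm (Fin n))
    (p : Fin m) (i : Fin n) : Prop :=
  (Js p).1 < (Js p).2 ∧ memJ (Js p) (posAt vs p i)

/-- The paths from sources `i` and `j` both pass through the central vertex of
the factor `G_{J_p}`. -/
def meetAt {n m : ℕ} (Js : Fin m → Fin n × Fin n) (vs : Fin m → Perm (Fin n))
    (p : Fin m) (i j : Fin n) : Prop :=
  centeredAt Js vs p i ∧ centeredAt Js vs p j

/-- The triple `(π_i, π_j, p)` is a crossing: the two paths intersect at the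
central vertex of `G_{J_p}` and cross there. -/
def crossingAt {n m : ℕ} (Js : Fin m → Fin n × Fin n) (vs : Fin m → Perm (Fin n))
    (p : Fin m) (i j : Fin n) : Prop :=
  meetAt Js vs p i j ∧
    ¬ ((posAt vs p i < posAt vs p j) ↔ (posAt vs (p.1 + 1) i < posAt vs (p.1 + 1) j))

/-- `cross(π)`: the number of crossings of the path family. -/
def crossNum {n m : ℕ} (Js : Fin m → Fin n × Fin n)
    (vs : Fin m → Perm (Fin n)) : ℕ :=
  ((univ : Finset ((Fin n × Fin n) × Fin m)).filter fun x =>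
    x.1.1 < x.1.2 ∧ crossingAt Js vs x.2 x.1.1 x.1.2).card

/-- The triple `(π_i, π_j, p)` is a noncrossing with `π_i` entering and
leaving the central vertex of `G_{J_p}` below `π_j`. -/
def noncrossBelow {n m : ℕ} (Js : Fin m → Fin n × Fin n) (vs : Fin m → Perm (Fin n))
    (p : Fin m) (i j : Fin n) : Prop :=
  meetAt Js vs p i j ∧
    posAt vs p i < posAt vs p j ∧ posAt vs (p.1 + 1) i < posAt vs (p.1 + 1) j

/-- `incross(U)` for a tableau `U` containing the paths of `π`, recorded via
the function `col` assigning to each path (index) the index of the column of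
`U` containing it: the number of inverted noncrossings, i.e. noncrossings
`(π_i, π_j, p)` (with `π_i` below `π_j`) such that `π_j` lies in an earlier
column of `U` than `π_i`. -/
def incrossNum {n m : ℕ} (Js : Fin m → Fin n × Fin n) (vs : Fin m → Perm (Fin n))
    (col : Fin n → ℕ) : ℕ :=
  ((univ : Finset ((Fin n × Fin n) × Fin m)).filter fun x =>
    noncrossBelow Js vs x.2 x.1.1 x.1.2 ∧ col x.1.2 < col x.1.1).card

/-- The number of crossings of the two paths `π_i, π_j` strictly before the
factor `G_{J_p}`. -/
def crossBefore {n m : ℕ} (Js : Fin m → Fin n × Fin n) (vs : Fin m → Perm (Fin n))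
    (p : Fin m) (i j : Fin n) : ℕ :=
  ((univ : Finset (Fin m)).filter fun k => k < p ∧ crossingAt Js vs k i j).card

/-- The triple `(π_i, π_j, p)` is defective: the paths meet at the central
vertex of `G_{J_p}` having previously crossed an odd number of times. -/
def defectiveAt {n m : ℕ} (Js : Fin m → Fin n × Fin n) (vs : Fin m → Perm (Fin n))
    (p : Fin m) (i j : Fin n) : Prop :=
  meetAt Js vs p i j ∧ Odd (crossBefore Js vs p i j)

/-- `dfct(π)`: the number of defective triples of the path family. -/
def dfctNum {n m : ℕ} (Js : Fin m → Fin n × Fin n)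
    (vs : Fin m → Perm (Fin n)) : ℕ :=
  ((univ : Finset ((Fin n × Fin n) × Fin m)).filter fun x =>
    x.1.1 < x.1.2 ∧ defectiveAt Js vs x.2 x.1.1 x.1.2).card

/-- `cdncross(W)`: the number of defective noncrossings between pairs of
paths appearing in the same column of the tableau recorded by `col`. -/
def cdncrossNum {n m : ℕ} (Js : Fin m → Fin n × Fin n) (vs : Fin m → Perm (Fin n))
    (col : Fin n → ℕ) : ℕ :=
  ((univ : Finset ((Fin n × Fin n) × Fin m)).filter fun x =>
    x.1.1 < x.1.2 ∧ defectiveAt Js vs x.2 x.1.1 x.1.2 ∧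
      ¬ crossingAt Js vs x.2 x.1.1 x.1.2 ∧ col x.1.1 = col x.1.2).card

/-- The adjacent transposition `s_{i+1}` (0-indexed: swaps positions `i` and
`i+1`). -/
def swp {n : ℕ} (i : ℕ) (h : i + 1 < n) : Perm (Fin n) :=
  Equiv.swap ⟨i, by omega⟩ ⟨i + 1, h⟩

end
/- Young subgroups, minimal coset representatives, the induced sign character
`ε_q^λ`, and column-strict tableaux (encoded by column assignments). -/

noncomputable section
open Equiv Finset
open scoped Classical

/-- Given a composition `lam = (λ_1, …, λ_r)` of `n`, the index of the block
`B_k = [λ_1 + ⋯ + λ_{k-1} + 1, λ_1 + ⋯ + λ_k]` containing the (0-indexed)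
position `i`. -/
def blockIdx (lam : List ℕ) (i : ℕ) : ℕ :=
  ((List.range lam.length).filter fun k => (lam.take (k + 1)).sum ≤ i).length

/-- Membership in the Young subgroup `S_λ`: the permutations preserving each
block `B_k`. -/
def inYoung {n : ℕ} (lam : List ℕ) (w : Perm (Fin n)) : Prop :=
  ∀ i : Fin n, blockIdx lam ((w i : Fin n) : ℕ) = blockIdx lam (i : ℕ)

/-- `u` is the minimum-length representative of its coset `S_λ u`
(in the paper's conventions, of the left coset `u S_λ` used in the
factorization `w = w_- w^*`): `u` has no inversions whose two values lie in a
common block. -/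
def isMinRep {n : ℕ} (lam : List ℕ) (u : Perm (Fin n)) : Prop :=
  ∀ i j : Fin n, i < j →
    blockIdx lam ((u i : Fin n) : ℕ) = blockIdx lam ((u j : Fin n) : ℕ) →
      u i < u j

/-- The induced sign character `ε_q^λ = sgn ↑_{H_λ(q)}^{H_n(q)}`, computed in
the natural basis: `H_n(q)` is a free right `H_λ(q)`-module with basis
`{T_u}` indexed by the minimum-length coset representatives, every basis
element factors as `T_{τ∘u} = T_u T_τ` with `τ ∈ S_λ`, the sign character
sends `T_τ` to `(-1)^{ℓ(τ)}`, and the character of the induced module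
`H_n(q) ⊗_{H_λ(q)} sgn` is obtained by summing the diagonal coefficients. -/
def epsChar {n : ℕ} {H : Type*} [Ring H] [Algebra R2 H] (lam : List ℕ)
    (T : Module.Basis (Perm (Fin n)) R2 H) (h : H) : R2 :=
  ∑ u ∈ (univ : Finset (Perm (Fin n))).filter (fun u => isMinRep lam u),
    ∑ τ ∈ (univ : Finset (Perm (Fin n))).filter (fun τ => inYoung lam τ),
      (-1 : R2) ^ len τ * T.repr (h * T u) (τ * u)

/-- A column-strict tableau of shape `λᵗ` (whose columns therefore have
lengths `λ_1, …, λ_r`) filled with the paths of a covering path family of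
type `typeOf vs`, encoded by the assignment `f` sending each path to the
index of its column: column `k` must have `λ_k` entries, and since the
entries of a column are arranged bottom-to-top in increasing order of source
index, column-strictness says that the sink indices of the paths in a common
column also increase with the source indices. -/
def IsColStrictAssign {n m : ℕ} (lam : List ℕ) (vs : Fin m → Perm (Fin n))
    (f : Fin n → Fin lam.length) : Prop :=
  (∀ k : Fin lam.length,
      ((univ : Finset (Fin n)).filter fun i => f i = k).card = lam.get k) ∧
    ∀ i j : Fin n, f i = f j → i < j → typeOf vs i < typeOf vs j

end
/- The data of the involution ζ on the tableau set T_I.  An ordered set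
partition `I = (I_1, …, I_r)` of `[n]` of type `λ` is encoded by the
permutation `u = u(I)` (increasing on each block `B_k`, with `I_k = u(B_k)`);
an element `U(π, u, yu)` of `U_I(G)` is encoded by the covering path family
`π` (with `typeOf π = u ∘ y ∘ u⁻¹` for some `y ∈ S_λ`); its image
`W = δ(U(π,u,yu)) ∈ T_I(G)` is the tableau of shape `λᵗ` whose `k`-th column
contains the paths with sources in `I_k`, so the column of the path `i` in
`W` is `colOf lam u i`. -/

noncomputable section
open Equiv Finset
open scoped Classical

/-- The column of the path `π_i` in the tableau `δ(U(π,u,yu)) ∈ T_I`. -/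
def colOf {n : ℕ} (lam : List ℕ) (u : Perm (Fin n)) (i : Fin n) : ℕ :=
  blockIdx lam ((u⁻¹ i : Fin n) : ℕ)

/-- Column `c` of the tableau `δ(U(π,u,yu))` is column-strict: its sink
indices increase (bottom to top) together with its source indices. -/
def colStrictCol {n m : ℕ} (lam : List ℕ) (u : Perm (Fin n))
    (vs : Fin m → Perm (Fin n)) (c : ℕ) : Prop :=
  ∀ i i' : Fin n, colOf lam u i = c → colOf lam u i' = c → i < i' →
    typeOf vs i < typeOf vs i'

/-- The path family obtained by swapping the terminal subpaths of the paths
from sources `i` and `i'`, beginning at the central vertex of the factor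
`G_{J_p}`: the permutation realized at factor `p` is composed with the
transposition of the two leaving positions. -/
def zetaSwap {n m : ℕ} (vs : Fin m → Perm (Fin n)) (p : Fin m)
    (i i' : Fin n) : Fin m → Perm (Fin n) :=
  fun k => if k = p then
    Equiv.swap (posAt vs (p.1 + 1) i) (posAt vs (p.1 + 1) i') * vs p
  else vs k

/-- The data entering the definition of the involution `ζ = ζ_I` at a
non-column-strict tableau `W = δ(U(π,u,yu)) ∈ T_I(G)`:
`tc` is the greatest index of a non-column-strict column of `W`; `p` is the
greatest index such that at least two paths of column `tc` pass through the
interior vertex of `G_{J_p}`; and `j, j'` are the two positions in block `tc`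
whose paths `π_{u_j}, π_{u_{j'}}` (through that vertex) have the
right-to-left lexicographically greatest pair of sink indices, normalized so
that the sink of `π_{u_{j'}}` is the larger.  Then `ζ(W)` is obtained from
`W` by replacing `π` with `zetaSwap vs p (u j) (u j')`. -/
structure ZetaData {n m : ℕ} (Js : Fin m → Fin n × Fin n) (lam : List ℕ)
    (u : Perm (Fin n)) (vs : Fin m → Perm (Fin n)) : Type where
  tc : ℕ
  p : Fin m
  j : Fin n
  j' : Fin n
  htc : ¬ colStrictCol lam u vs tc
  htcMax : ∀ c : ℕ, tc < c → colStrictCol lam u vs c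
  hpMeet : ∃ i i' : Fin n, i ≠ i' ∧ colOf lam u i = tc ∧ colOf lam u i' = tc ∧
    centeredAt Js vs p i ∧ centeredAt Js vs p i'
  hpMax : ∀ p' : Fin m, p < p' →
    ¬ ∃ i i' : Fin n, i ≠ i' ∧ colOf lam u i = tc ∧ colOf lam u i' = tc ∧
      centeredAt Js vs p' i ∧ centeredAt Js vs p' i'
  hne : j ≠ j'
  hjcol : blockIdx lam (j : ℕ) = tc
  hjcol' : blockIdx lam (j' : ℕ) = tc
  hjcent : centeredAt Js vs p (u j)
  hjcent' : centeredAt Js vs p (u j')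
  hord : typeOf vs (u j) < typeOf vs (u j')
  hmax : ∀ k k' : Fin n, k ≠ k' →
    blockIdx lam (k : ℕ) = tc → blockIdx lam (k' : ℕ) = tc →
    centeredAt Js vs p (u k) → centeredAt Js vs p (u k') →
    typeOf vs (u k) < typeOf vs (u k') →
    (typeOf vs (u k') < typeOf vs (u j') ∨
      (k' = j' ∧ typeOf vs (u k) ≤ typeOf vs (u j)))

/-- The number `b` of paths of `π` which enter the factor `G_{J_p}` between
the paths from sources `i` and `i'`, and which also leave `G_{J_p}` between
the same two paths. -/
def betweenNum {n m : ℕ} (Js : Fin m → Fin n × Fin n) (vs : Fin m → Perm (Fin n))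
    (p : Fin m) (i i' : Fin n) : ℕ :=
  ((univ : Finset (Fin n)).filter fun x =>
    x ≠ i ∧ x ≠ i' ∧ centeredAt Js vs p x ∧
      (min (posAt vs p i) (posAt vs p i') < posAt vs p x ∧
        posAt vs p x < max (posAt vs p i) (posAt vs p i')) ∧
      (min (posAt vs (p.1 + 1) i) (posAt vs (p.1 + 1) i') < posAt vs (p.1 + 1) x ∧
        posAt vs (p.1 + 1) x < max (posAt vs (p.1 + 1) i) (posAt vs (p.1 + 1) i'))).card

end
noncomputable section
open Equiv Finset
open scoped Classical

namespace StarAux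

variable {n m : ℕ} {Js : Fin m → Fin n × Fin n} {vs : Fin m → Perm (Fin n)}

lemma lt_iff_not_lt_of_ne {α} [LinearOrder α] {a b : α} (h : a ≠ b) : a < b ↔ ¬ b < a :=
  ⟨fun h' => lt_asymm h', fun h' => (not_lt.mp h').lt_of_ne h⟩

lemma blockIdx_mono (lam : List ℕ) {a b : ℕ} (h : a ≤ b) :
    blockIdx lam a ≤ blockIdx lam b := by
  unfold blockIdx
  apply List.Sublist.length_le
  apply List.monotone_filter_right
  intro k hk
  simp only [decide_eq_true_eq] at *
  omega

lemma posAt_zero (vs : Fin m → Perm (Fin n)) : posAt vs 0 = 1 := by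
  simp [posAt]

lemma posAt_succ (vs : Fin m → Perm (Fin n)) {k : ℕ} (h : k < m) :
    posAt vs (k + 1) = vs ⟨k, h⟩ * posAt vs k := by
  unfold posAt
  rw [List.take_succ, List.reverse_append, List.prod_append]
  simp [List.getElem?_ofFn, h]

lemma apply_mem_J (hvs : IsPathFamily Js vs) (p : Fin m) (x : Fin n) :
    vs p x = x ∨ memJ (Js p) (vs p x) := by
  by_cases h : vs p x = x
  · exact Or.inl h
  · exact Or.inr (hvs p (vs p x) (fun hc => h ((vs p).injective hc)))

lemma fix_of_not_mem (hvs : IsPathFamily Js vs) (p : Fin m) {x : Fin n}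
    (hx : ¬ memJ (Js p) x) : vs p x = x := by
  by_contra h; exact hx (hvs p x h)

lemma eq_id_of_trivial (hvs : IsPathFamily Js vs) (p : Fin m)
    (h : ¬ (Js p).1 < (Js p).2) (x : Fin n) : vs p x = x := by
  by_contra hx
  obtain ⟨ha, hb⟩ := hvs p x hx
  obtain ⟨ha', hb'⟩ := hvs p (vs p x) (fun hc => hx ((vs p).injective hc))
  have hba : (Js p).2 ≤ (Js p).1 := not_lt.mp h
  exact hx (le_antisymm (le_trans hb' (le_trans hba ha)) (le_trans hb (le_trans hba ha')))

lemma vsp_order_of_not_mem (hvs : IsPathFamily Js vs) (p : Fin m)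
    {x y : Fin n} (hx : ¬ memJ (Js p) x) :
    (vs p x < vs p y ↔ x < y) := by
  have hfx : vs p x = x := fix_of_not_mem hvs p hx
  rcases eq_or_ne (vs p y) y with hfy | hfy
  · rw [hfx, hfy]
  · have hy : memJ (Js p) y := hvs p y hfy
    have hy' : memJ (Js p) (vs p y) :=
      (apply_mem_J hvs p y).resolve_left hfy
    rw [hfx]
    unfold memJ at hx hy hy'
    simp only [Fin.lt_def, Fin.le_def, not_and, not_le] at *
    omega

lemma step_iff (hvs : IsPathFamily Js vs) {k : ℕ} (hk : k < m) (i j : Fin n)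
    (hnc : ¬ crossingAt Js vs ⟨k, hk⟩ i j) :
    (posAt vs (k + 1) i < posAt vs (k + 1) j ↔ posAt vs k i < posAt vs k j) := by
  have hstep : posAt vs (k + 1) = vs ⟨k, hk⟩ * posAt vs k := posAt_succ vs hk
  rcases eq_or_ne i j with rfl | hij
  · simp
  by_cases hmeet : meetAt Js vs ⟨k, hk⟩ i j
  · unfold crossingAt at hnc
    push_neg at hnc
    have h := hnc hmeet
    exact h.symm
  · rw [hstep]
    simp only [Perm.mul_apply]
    by_cases hab : (Js ⟨k, hk⟩).1 < (Js ⟨k, hk⟩).2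
    · unfold meetAt centeredAt at hmeet
      push_neg at hmeet
      by_cases hi : memJ (Js ⟨k, hk⟩) (posAt vs k i)
      · have hj : ¬ memJ (Js ⟨k, hk⟩) (posAt vs k j) := by tauto
        have h1 := vsp_order_of_not_mem hvs ⟨k, hk⟩ (y := posAt vs k i) hj
        have hne1 : posAt vs k j ≠ posAt vs k i :=
          fun h => hij ((posAt vs k).injective h).symm
        have hne2 : vs ⟨k, hk⟩ (posAt vs k j) ≠ vs ⟨k, hk⟩ (posAt vs k i) :=
          fun h => hne1 ((vs ⟨k, hk⟩).injective h)
        rw [lt_iff_not_lt_of_ne (Ne.symm hne2), lt_iff_not_lt_of_ne (Ne.symm hne1)]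
        exact not_congr h1
      · exact vsp_order_of_not_mem hvs ⟨k, hk⟩ hi
    · rw [eq_id_of_trivial hvs ⟨k, hk⟩ hab, eq_id_of_trivial hvs ⟨k, hk⟩ hab]

def cb (Js : Fin m → Fin n × Fin n) (vs : Fin m → Perm (Fin n)) (k : ℕ)
    (i j : Fin n) : ℕ :=
  ((univ : Finset (Fin m)).filter fun q => q.1 < k ∧ crossingAt Js vs q i j).card

lemma order_parity (hvs : IsPathFamily Js vs) {i j : Fin n} (hij : i ≠ j) :
    ∀ k : ℕ, (posAt vs k i < posAt vs k j ↔ (i < j ↔ Even (cb Js vs k i j))) := by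
  intro k
  induction k with
  | zero =>
    have h0 : cb Js vs 0 i j = 0 := by
      unfold cb
      rw [Finset.card_eq_zero]
      ext q
      simp
    simp [posAt_zero, h0]
  | succ k ih =>
    by_cases hk : k < m
    · have hset : ((univ : Finset (Fin m)).filter fun q => q.1 < k + 1 ∧ crossingAt Js vs q i j)
          = ((univ : Finset (Fin m)).filter fun q => q.1 < k ∧ crossingAt Js vs q i j)
            ∪ ((univ : Finset (Fin m)).filter fun q => q = ⟨k, hk⟩ ∧ crossingAt Js vs q i j) := by
        ext q
        simp only [mem_filter, mem_union, mem_univ, true_and]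
        constructor
        · rintro ⟨h1, h2⟩
          rcases Nat.lt_succ_iff_lt_or_eq.mp h1 with h | h
          · exact Or.inl ⟨h, h2⟩
          · exact Or.inr ⟨Fin.ext h, h2⟩
        · rintro (⟨h1, h2⟩ | ⟨h1, h2⟩)
          · exact ⟨Nat.lt_succ_of_lt h1, h2⟩
          · exact ⟨by simp [h1], h2⟩
      have hdisj : Disjoint
          ((univ : Finset (Fin m)).filter fun q => q.1 < k ∧ crossingAt Js vs q i j)
          ((univ : Finset (Fin m)).filter fun q => q = ⟨k, hk⟩ ∧ crossingAt Js vs q i j) := by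
        rw [Finset.disjoint_left]
        intro q h1 h2
        simp only [mem_filter] at h1 h2
        rw [h2.2.1] at h1
        exact absurd h1.2.1 (lt_irrefl k)
      have hcb : cb Js vs (k + 1) i j = cb Js vs k i j +
          (if crossingAt Js vs ⟨k, hk⟩ i j then 1 else 0) := by
        unfold cb
        rw [hset, Finset.card_union_of_disjoint hdisj]
        congr 1
        by_cases hc : crossingAt Js vs ⟨k, hk⟩ i j
        · rw [if_pos hc]
          have : ((univ : Finset (Fin m)).filter fun q => q = ⟨k, hk⟩ ∧ crossingAt Js vs q i j)
              = {⟨k, hk⟩} := by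
            ext q
            simp only [mem_filter, mem_univ, true_and, mem_singleton]
            exact ⟨fun h => h.1, fun h => ⟨h, h ▸ hc⟩⟩
          rw [this, Finset.card_singleton]
        · rw [if_neg hc, Finset.card_eq_zero, Finset.filter_eq_empty_iff]
          intro q _
          rintro ⟨rfl, h⟩
          exact hc h
      by_cases hc : crossingAt Js vs ⟨k, hk⟩ i j
      · have hflip : posAt vs (k + 1) i < posAt vs (k + 1) j ↔
            ¬ (posAt vs k i < posAt vs k j) := by
          have h2 := hc.2
          have hne1 : posAt vs k i ≠ posAt vs k j :=
            fun h => hij ((posAt vs k).injective h)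
          have hne2 : posAt vs (k + 1) i ≠ posAt vs (k + 1) j :=
            fun h => hij ((posAt vs (k + 1)).injective h)
          tauto
        rw [hcb, if_pos hc, Nat.even_add_one]
        rw [hflip, ih]
        tauto
      · rw [hcb, if_neg hc, Nat.add_zero, step_iff hvs hk i j hc]
        exact ih
    · have hm : m ≤ k := le_of_not_gt hk
      have e1 : posAt vs (k + 1) = posAt vs k := by
        unfold posAt
        rw [List.take_of_length_le (by simp; omega), List.take_of_length_le (by simp; omega)]
      have e2 : cb Js vs (k + 1) i j = cb Js vs k i j := by
        unfold cb
        congr 1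
        apply Finset.filter_congr
        intro q _
        have hq := q.2
        constructor
        · rintro ⟨_, h⟩; exact ⟨by omega, h⟩
        · rintro ⟨_, h⟩; exact ⟨by omega, h⟩
      rw [e1, e2]
      exact ih

lemma crossBefore_eq_cb (p : Fin m) (i j : Fin n) :
    crossBefore Js vs p i j = cb Js vs p.1 i j := by
  unfold crossBefore cb
  congr 1

lemma order_parity' (hvs : IsPathFamily Js vs) (p : Fin m) {i j : Fin n} (hij : i ≠ j) :
    (posAt vs p.1 i < posAt vs p.1 j ↔ (i < j ↔ Even (crossBefore Js vs p i j))) := by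
  rw [crossBefore_eq_cb]
  exact order_parity hvs hij p.1

lemma crossingAt_symm (q : Fin m) {i j : Fin n} (hij : i ≠ j) :
    crossingAt Js vs q i j ↔ crossingAt Js vs q j i := by
  have hne1 : posAt vs q.1 i ≠ posAt vs q.1 j :=
    fun h => hij ((posAt vs q.1).injective h)
  have hne2 : posAt vs (q.1 + 1) i ≠ posAt vs (q.1 + 1) j :=
    fun h => hij ((posAt vs (q.1 + 1)).injective h)
  have hA := lt_iff_not_lt_of_ne hne1
  have hB := lt_iff_not_lt_of_ne hne2
  unfold crossingAt meetAt
  constructor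
  · rintro ⟨⟨c1, c2⟩, h⟩
    exact ⟨⟨c2, c1⟩, by tauto⟩
  · rintro ⟨⟨c1, c2⟩, h⟩
    exact ⟨⟨c2, c1⟩, by tauto⟩

lemma crossBefore_symm (p : Fin m) {i j : Fin n} (hij : i ≠ j) :
    crossBefore Js vs p i j = crossBefore Js vs p j i := by
  unfold crossBefore
  congr 1
  apply Finset.filter_congr
  intro q _
  have h := crossingAt_symm (Js := Js) (vs := vs) q hij
  tauto

end StarAux

/-- Lemma 5.1 / `l:TU`.  Let `G = G_{J_1} ∘ ⋯ ∘ G_{J_m}`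
be a star network, `I` an ordered set partition of `[n]` of type `λ`
(encoded by the permutation `u = u(I)`, increasing on each block `B_k`, with
`I_k = u(B_k)`), and `U = U(π,u,yu) ∈ U_I(G)` (so `π` covers `G`, `y ∈ S_λ`,
and `typeOf π = u ∘ y ∘ u⁻¹`).  Then
`incross(U) = incross(δ(U)) + cdncross(δ(U))`: in the one-row tableau `U` the
column of `π_i` is `u⁻¹(i)`, while in `δ(U) ∈ T_I(G)` it is `colOf lam u i`. -/
theorem incross_delta_decomposition
    {n m : ℕ} (Js : Fin m → Fin n × Fin n) (hJs : ∀ p, (Js p).1 ≤ (Js p).2)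
    (lam : List ℕ) (hsum : lam.sum = n) (hpos : ∀ x ∈ lam, 0 < x)
    (hsort : lam.Pairwise (fun a b => b ≤ a))
    (u : Perm (Fin n))
    (hu : ∀ i j : Fin n, i < j →
      blockIdx lam (i : ℕ) = blockIdx lam (j : ℕ) → u i < u j)
    (vs : Fin m → Perm (Fin n)) (hvs : IsPathFamily Js vs)
    (y : Perm (Fin n)) (hy : inYoung lam y)
    (hty : typeOf vs = u * y * u⁻¹) :
    incrossNum Js vs (fun i => ((u⁻¹ i : Fin n) : ℕ)) =
      incrossNum Js vs (colOf lam u) + cdncrossNum Js vs (colOf lam u) := by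
  classical
  have hcol2 : ∀ i : Fin n, colOf lam u i = blockIdx lam ((u⁻¹ i : Fin n) : ℕ) :=
    fun i => rfl
  set col1 : Fin n → ℕ := fun i => ((u⁻¹ i : Fin n) : ℕ) with hcol1def
  have key : ∀ a b : ℕ,
      ((a < b ↔ (blockIdx lam a < blockIdx lam b ∨
        (blockIdx lam b = blockIdx lam a ∧ a < b))) ∧
       ¬ (blockIdx lam a < blockIdx lam b ∧
          (blockIdx lam b = blockIdx lam a ∧ a < b))) := by
    intro a b
    have m1 : a ≤ b → blockIdx lam a ≤ blockIdx lam b := fun h => StarAux.blockIdx_mono lam h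
    have m2 : b ≤ a → blockIdx lam b ≤ blockIdx lam a := fun h => StarAux.blockIdx_mono lam h
    omega
  set S2 : Finset ((Fin n × Fin n) × Fin m) :=
    (univ.filter fun x => noncrossBelow Js vs x.2 x.1.1 x.1.2 ∧
      colOf lam u x.1.2 < colOf lam u x.1.1) with hS2
  set S3 : Finset ((Fin n × Fin n) × Fin m) :=
    (univ.filter fun x => noncrossBelow Js vs x.2 x.1.1 x.1.2 ∧
      colOf lam u x.1.1 = colOf lam u x.1.2 ∧ col1 x.1.2 < col1 x.1.1) with hS3
  have hsplit : incrossNum Js vs col1 = S2.card + S3.card := by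
    have hdisj : Disjoint S2 S3 := by
      rw [Finset.disjoint_left]
      intro x h2 h3
      rw [hS2, mem_filter] at h2
      rw [hS3, mem_filter] at h3
      refine (key (col1 x.1.2) (col1 x.1.1)).2 ⟨?_, ?_, h3.2.2.2⟩
      · simpa [hcol2, hcol1def] using h2.2.2
      · simpa [hcol2, hcol1def] using h3.2.2.1
    rw [← Finset.card_union_of_disjoint hdisj]
    unfold incrossNum
    congr 1
    ext x
    simp only [hS2, hS3, mem_filter, mem_union, mem_univ, true_and]
    have hk := (key (col1 x.1.2) (col1 x.1.1)).1
    simp only [hcol2]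
    constructor
    · rintro ⟨h1, h2⟩
      rcases hk.mp h2 with h | h
      · exact Or.inl ⟨h1, h⟩
      · exact Or.inr ⟨h1, h.1, h.2⟩
    · rintro (⟨h1, h2⟩ | ⟨h1, h2, h3⟩)
      · exact ⟨h1, hk.mpr (Or.inl h2)⟩
      · exact ⟨h1, hk.mpr (Or.inr ⟨h2, h3⟩)⟩
  have hS3card : S3.card = cdncrossNum Js vs (colOf lam u) := by
    unfold cdncrossNum
    apply Finset.card_bij (fun x _ => ((x.1.2, x.1.1), x.2))
    · -- maps into
      rintro ⟨⟨i, j⟩, p⟩ hx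
      rw [hS3, mem_filter] at hx
      obtain ⟨-, hncb, hceq, hc1⟩ := hx
      simp only at hncb hceq hc1 ⊢
      obtain ⟨hmeet, hlt, hlt'⟩ := hncb
      have hij : i ≠ j := by
        intro h
        rw [h] at hc1
        exact lt_irrefl _ hc1
      have hblk : blockIdx lam ((u⁻¹ j : Fin n) : ℕ) = blockIdx lam ((u⁻¹ i : Fin n) : ℕ) := by
        simpa [hcol2] using hceq.symm
      have hji : j < i := by
        have := hu (u⁻¹ j) (u⁻¹ i) (by rw [Fin.lt_def]; exact hc1) hblk
        simpa using this
      have hodd : Odd (crossBefore Js vs p i j) := by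
        have hop := StarAux.order_parity' hvs p hij
        rcases Nat.even_or_odd (crossBefore Js vs p i j) with hev | ho
        · exact absurd ((hop.mp hlt).mpr hev) (lt_asymm hji)
        · exact ho
      rw [mem_filter]
      refine ⟨mem_univ _, hji, ⟨⟨hmeet.2, hmeet.1⟩, ?_⟩, ?_, hceq.symm⟩
      · rw [StarAux.crossBefore_symm p hij.symm]
        exact hodd
      · rintro ⟨-, hcr⟩
        exact hcr (iff_of_false (lt_asymm hlt) (lt_asymm hlt'))
    · -- injective
      rintro ⟨⟨a1, a2⟩, a3⟩ - ⟨⟨b1, b2⟩, b3⟩ - h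
      simp only [Prod.mk.injEq] at h ⊢
      tauto
    · -- surjective
      rintro ⟨⟨a, b⟩, p⟩ hx
      rw [mem_filter] at hx
      obtain ⟨-, hab, hdef, hncr, hcoleq⟩ := hx
      simp only at hab hdef hncr hcoleq
      obtain ⟨hmeet, hodd⟩ := hdef
      have hne : a ≠ b := ne_of_lt hab
      have hne1 : posAt vs p.1 a ≠ posAt vs p.1 b :=
        fun h => hne ((posAt vs p.1).injective h)
      have hne2 : posAt vs (p.1 + 1) a ≠ posAt vs (p.1 + 1) b :=
        fun h => hne ((posAt vs (p.1 + 1)).injective h)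
      have hop := StarAux.order_parity' hvs p hne
      have hnlt : ¬ posAt vs p.1 a < posAt vs p.1 b := by
        intro h
        exact (Nat.not_even_iff_odd.mpr hodd) ((hop.mp h).mp hab)
      have hlt : posAt vs p.1 b < posAt vs p.1 a :=
        (StarAux.lt_iff_not_lt_of_ne hne1.symm).mpr hnlt
      have hiff : posAt vs p.1 a < posAt vs p.1 b ↔
          posAt vs (p.1 + 1) a < posAt vs (p.1 + 1) b := by
        unfold crossingAt at hncr
        tauto
      have hlt' : posAt vs (p.1 + 1) b < posAt vs (p.1 + 1) a :=
        (StarAux.lt_iff_not_lt_of_ne hne2.symm).mpr (fun h => hnlt (hiff.mpr h))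
      have hblk : blockIdx lam ((u⁻¹ a : Fin n) : ℕ) = blockIdx lam ((u⁻¹ b : Fin n) : ℕ) := by
        simpa [hcol2] using hcoleq
      have hc1 : col1 a < col1 b := by
        rcases lt_trichotomy (u⁻¹ a) (u⁻¹ b) with h | h | h
        · rw [Fin.lt_def] at h
          exact h
        · exact absurd (by simpa using congrArg u h) hne
        · have := hu (u⁻¹ b) (u⁻¹ a) h hblk.symm
          simp only [Perm.inv_def, Equiv.apply_symm_apply] at this
          exact absurd this (lt_asymm hab)
      refine ⟨((b, a), p), ?_, rfl⟩
      rw [hS3, mem_filter]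
      exact ⟨mem_univ _, ⟨⟨hmeet.2, hmeet.1⟩, hlt, hlt'⟩, hcoleq.symm, hc1⟩
  rw [hsplit, hS3card]
  rfl

end
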